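/- Let λ₁ ≥ … ≥ λ_m ≥ 0 be a nonincreasing nonnegative sequence with at least one nonzero element, let 𝕀 = {𝕀_1,…,𝕀_m} be a partition of {1,…,p̃}, and let W = diag(w₁,…,w_m) with all w_i > 0. Then the function b ↦ J_λ(W ⟦b⟧_𝕀) is a norm on ℝ^{p̃}: it vanishes exactly at 0, is absolutely homogeneous, and satisfies the triangle inequality. -/

import Mathlib

/-- The nonincreasing rearrangement of the absolute values of the coordinates of `b`. -/
noncomputable def sortedAbs {p : ℕ} (b : Fin p → ℝ) : Fin p → ℝ :=
  fun i => |b (Tuple.sort (fun j => |b j|) (Fin.rev i))|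

/-- The sorted ℓ₁ norm `J_λ(b) = Σ_i λ_i |b|_{(i)}`. -/
noncomputable def Jlam {p : ℕ} (lam b : Fin p → ℝ) : ℝ :=
  ∑ i, lam i * sortedAbs b i

open Finset in
/-- Given a partition of the coordinates `{1,…,p}` into groups (encoded by the map `grp`
sending each coordinate to its group), `groupNorm grp b i = ‖b_{I_i}‖₂` is the Euclidean
norm of the restriction of `b` to the `i`-th group. -/
noncomputable def groupNorm {pt m : ℕ} (grp : Fin pt → Fin m) (b : Fin pt → ℝ)
    (i : Fin m) : ℝ :=
  Real.sqrt (∑ j ∈ univ.filter (fun j => grp j = i), b j ^ 2)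


open Finset

/-- The permutation realizing `sortedAbs`. -/
noncomputable def sortPerm {p : ℕ} (b : Fin p → ℝ) : Equiv.Perm (Fin p) :=
  (Fin.revPerm).trans (Tuple.sort (fun j => |b j|))

lemma sortedAbs_eq {p : ℕ} (b : Fin p → ℝ) (i : Fin p) :
    sortedAbs b i = |b (sortPerm b i)| := rfl

lemma sortedAbs_antitone {p : ℕ} (b : Fin p → ℝ) : Antitone (sortedAbs b) := by
  intro i j hij
  have h := Tuple.monotone_sort (fun k => |b k|)
  exact h (show Fin.rev j ≤ Fin.rev i from Fin.rev_le_rev.mpr hij)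

lemma sum_mul_abs_comp_le {m : ℕ} (lam : Fin m → ℝ)
    (hlam_anti : ∀ i j : Fin m, i ≤ j → lam j ≤ lam i)
    (c : Fin m → ℝ) (σ : Equiv.Perm (Fin m)) :
    ∑ i, lam i * |c (σ i)| ≤ Jlam lam c := by
  have hmono : Monovary lam (sortedAbs c) := by
    intro i j hij
    rcases le_total i j with h | h
    · exact absurd hij (not_lt.2 (sortedAbs_antitone c h))
    · exact hlam_anti j i h
  have key : ∑ i, lam i * sortedAbs c (((σ.trans (sortPerm c).symm)) i)
      ≤ ∑ i, lam i * sortedAbs c i :=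
    hmono.sum_mul_comp_perm_le_sum_mul
  have heq : ∀ i, sortedAbs c ((σ.trans (sortPerm c).symm) i) = |c (σ i)| := by
    intro i
    simp [sortedAbs_eq]
  calc ∑ i, lam i * |c (σ i)| = ∑ i, lam i * sortedAbs c ((σ.trans (sortPerm c).symm) i) := by
        simp_rw [heq]
    _ ≤ ∑ i, lam i * sortedAbs c i := key
    _ = Jlam lam c := rfl

lemma Jlam_eq_sum {m : ℕ} (lam c : Fin m → ℝ) :
    Jlam lam c = ∑ i, lam i * |c (sortPerm c i)| := rfl
lemma Jlam_le_of_abs_le {m : ℕ} (lam : Fin m → ℝ)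
    (hlam_anti : ∀ i j : Fin m, i ≤ j → lam j ≤ lam i)
    (hlam_nonneg : ∀ i, 0 ≤ lam i) {c d : Fin m → ℝ}
    (h : ∀ i, |c i| ≤ |d i|) : Jlam lam c ≤ Jlam lam d := by
  rw [Jlam_eq_sum lam c]
  calc ∑ i, lam i * |c (sortPerm c i)|
      ≤ ∑ i, lam i * |d (sortPerm c i)| :=
        Finset.sum_le_sum fun i _ => mul_le_mul_of_nonneg_left (h _) (hlam_nonneg _)
    _ ≤ Jlam lam d := sum_mul_abs_comp_le lam hlam_anti d _

lemma Jlam_add_le' {m : ℕ} (lam : Fin m → ℝ)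
    (hlam_anti : ∀ i j : Fin m, i ≤ j → lam j ≤ lam i)
    (hlam_nonneg : ∀ i, 0 ≤ lam i) {u x y : Fin m → ℝ}
    (h : ∀ i, |u i| ≤ |x i| + |y i|) :
    Jlam lam u ≤ Jlam lam x + Jlam lam y := by
  rw [Jlam_eq_sum lam u]
  have h1 : ∑ i, lam i * |u (sortPerm u i)|
      ≤ ∑ i, (lam i * |x (sortPerm u i)| + lam i * |y (sortPerm u i)|) := by
    refine Finset.sum_le_sum fun i _ => ?_
    rw [← mul_add]
    exact mul_le_mul_of_nonneg_left (h _) (hlam_nonneg _)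
  rw [Finset.sum_add_distrib] at h1
  exact h1.trans (add_le_add (sum_mul_abs_comp_le lam hlam_anti x _)
    (sum_mul_abs_comp_le lam hlam_anti y _))

lemma Jlam_smul {m : ℕ} (lam : Fin m → ℝ)
    (hlam_anti : ∀ i j : Fin m, i ≤ j → lam j ≤ lam i)
    (hlam_nonneg : ∀ i, 0 ≤ lam i) (s : ℝ) (hs : 0 ≤ s) (c : Fin m → ℝ) :
    Jlam lam (fun i => s * c i) = s * Jlam lam c := by
  have habs : ∀ x : ℝ, |s * x| = s * |x| := fun x => by
    rw [abs_mul, abs_of_nonneg hs]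
  apply le_antisymm
  · rw [Jlam_eq_sum lam (fun i => s * c i)]
    calc ∑ i, lam i * |s * c (sortPerm (fun i => s * c i) i)|
        = s * ∑ i, lam i * |c (sortPerm (fun i => s * c i) i)| := by
          rw [Finset.mul_sum]; exact Finset.sum_congr rfl fun i _ => by rw [habs]; ring
      _ ≤ s * Jlam lam c :=
          mul_le_mul_of_nonneg_left (sum_mul_abs_comp_le lam hlam_anti c _) hs
  · rw [Jlam_eq_sum lam c, Finset.mul_sum]
    have h2 : ∑ i, s * (lam i * |c (sortPerm c i)|)
        = ∑ i, lam i * |s * c (sortPerm c i)| :=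
      Finset.sum_congr rfl fun i _ => by rw [habs]; ring
    rw [h2]
    exact sum_mul_abs_comp_le lam hlam_anti (fun i => s * c i) (sortPerm c)

open Finset in
lemma sqrt_sum_sq_add_le {ι : Type*} (s : Finset ι) (f g : ι → ℝ) :
    Real.sqrt (∑ j ∈ s, (f j + g j) ^ 2) ≤
      Real.sqrt (∑ j ∈ s, f j ^ 2) + Real.sqrt (∑ j ∈ s, g j ^ 2) := by
  have hA : (0:ℝ) ≤ ∑ j ∈ s, f j ^ 2 := Finset.sum_nonneg fun j _ => sq_nonneg _
  have hB : (0:ℝ) ≤ ∑ j ∈ s, g j ^ 2 := Finset.sum_nonneg fun j _ => sq_nonneg _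
  have hCS := Finset.sum_mul_sq_le_sq_mul_sq s f g
  have hC : ∑ j ∈ s, f j * g j
      ≤ Real.sqrt (∑ j ∈ s, f j ^ 2) * Real.sqrt (∑ j ∈ s, g j ^ 2) := by
    calc ∑ j ∈ s, f j * g j ≤ |∑ j ∈ s, f j * g j| := le_abs_self _
      _ = Real.sqrt ((∑ j ∈ s, f j * g j) ^ 2) := (Real.sqrt_sq_eq_abs _).symm
      _ ≤ Real.sqrt ((∑ j ∈ s, f j ^ 2) * ∑ j ∈ s, g j ^ 2) := Real.sqrt_le_sqrt hCS
      _ = _ := Real.sqrt_mul hA _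
  have hexp : ∑ j ∈ s, (f j + g j) ^ 2
      = ∑ j ∈ s, f j ^ 2 + 2 * ∑ j ∈ s, f j * g j + ∑ j ∈ s, g j ^ 2 := by
    rw [Finset.mul_sum, ← Finset.sum_add_distrib, ← Finset.sum_add_distrib]
    exact Finset.sum_congr rfl fun j _ => by ring
  rw [hexp]
  have sA := Real.sq_sqrt hA
  have sB := Real.sq_sqrt hB
  have h2 : ∑ j ∈ s, f j ^ 2 + 2 * ∑ j ∈ s, f j * g j + ∑ j ∈ s, g j ^ 2
      ≤ (Real.sqrt (∑ j ∈ s, f j ^ 2) + Real.sqrt (∑ j ∈ s, g j ^ 2)) ^ 2 := by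
    nlinarith [hC]
  calc Real.sqrt (∑ j ∈ s, f j ^ 2 + 2 * ∑ j ∈ s, f j * g j + ∑ j ∈ s, g j ^ 2)
      ≤ Real.sqrt ((Real.sqrt (∑ j ∈ s, f j ^ 2) + Real.sqrt (∑ j ∈ s, g j ^ 2)) ^ 2) :=
        Real.sqrt_le_sqrt h2
    _ = _ := Real.sqrt_sq (by positivity)

open Finset in
lemma gN_nonneg {pt m : ℕ} (grp : Fin pt → Fin m) (b : Fin pt → ℝ) (i : Fin m) :
    0 ≤ groupNorm grp b i := Real.sqrt_nonneg _

open Finset in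
lemma gN_smul {pt m : ℕ} (grp : Fin pt → Fin m) (t : ℝ) (b : Fin pt → ℝ) (i : Fin m) :
    groupNorm grp (t • b) i = |t| * groupNorm grp b i := by
  unfold groupNorm
  have : ∑ j ∈ univ.filter (fun j => grp j = i), (t • b) j ^ 2
      = t ^ 2 * ∑ j ∈ univ.filter (fun j => grp j = i), b j ^ 2 := by
    rw [Finset.mul_sum]
    exact Finset.sum_congr rfl fun j _ => by simp [mul_pow]
  rw [this, Real.sqrt_mul (sq_nonneg t), Real.sqrt_sq_eq_abs]

open Finset in
lemma gN_add_le {pt m : ℕ} (grp : Fin pt → Fin m) (a b : Fin pt → ℝ) (i : Fin m) :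
    groupNorm grp (a + b) i ≤ groupNorm grp a i + groupNorm grp b i := by
  unfold groupNorm
  have := sqrt_sum_sq_add_le (univ.filter (fun j => grp j = i)) a b
  simpa using this
/-- The function `b ↦ J_λ(W ⟦b⟧_𝕀)` is a norm on `ℝ^p̃` whenever the groups are nonempty
(`grp` surjective), `λ` is nonincreasing nonnegative with at least one nonzero element, and
the weights `w_i` are positive: it vanishes exactly at `0`, is absolutely homogeneous, and
satisfies the triangle inequality. -/
theorem groupSortedL1_is_norm {pt m : ℕ} (grp : Fin pt → Fin m)
    (hgrp : Function.Surjective grp)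
    (lam : Fin m → ℝ)
    (hlam_anti : ∀ i j : Fin m, i ≤ j → lam j ≤ lam i)
    (hlam_nonneg : ∀ i, 0 ≤ lam i)
    (hlam_ne : ∃ i, lam i ≠ 0)
    (w : Fin m → ℝ) (hw : ∀ i, 0 < w i) :
    (∀ b : Fin pt → ℝ,
        Jlam lam (fun i => w i * groupNorm grp b i) = 0 ↔ b = 0) ∧
    (∀ (t : ℝ) (b : Fin pt → ℝ),
        Jlam lam (fun i => w i * groupNorm grp (t • b) i) =
          |t| * Jlam lam (fun i => w i * groupNorm grp b i)) ∧
    (∀ a b : Fin pt → ℝ,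
        Jlam lam (fun i => w i * groupNorm grp (a + b) i) ≤
          Jlam lam (fun i => w i * groupNorm grp a i) +
            Jlam lam (fun i => w i * groupNorm grp b i)) := by
  have hgNnn : ∀ (b : Fin pt → ℝ) (i : Fin m), 0 ≤ w i * groupNorm grp b i :=
    fun b i => mul_nonneg (hw i).le (gN_nonneg grp b i)
  refine ⟨?_, ?_, ?_⟩
  · -- definiteness
    intro b
    constructor
    · intro h
      set c : Fin m → ℝ := fun i => w i * groupNorm grp b i with hc
      obtain ⟨i0, hi0⟩ := hlam_ne
      haveI : NeZero m := ⟨Nat.ne_zero_of_lt i0.pos⟩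
      have hlam0 : 0 < lam 0 :=
        lt_of_lt_of_le ((hlam_nonneg i0).lt_of_ne (Ne.symm hi0)) (hlam_anti 0 i0 (Fin.zero_le _))
      have hterm : ∀ i ∈ Finset.univ, (0:ℝ) ≤ lam i * sortedAbs c i :=
        fun i _ => mul_nonneg (hlam_nonneg i) (abs_nonneg _)
      have hall := (Finset.sum_eq_zero_iff_of_nonneg hterm).1 h
      have hs0 : sortedAbs c 0 = 0 := by
        rcases mul_eq_zero.1 (hall 0 (Finset.mem_univ _)) with h' | h'
        · exact absurd h' hlam0.ne'
        · exact h'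
      have hcz : ∀ i, c i = 0 := by
        intro i
        have h1 : |c i| = sortedAbs c ((sortPerm c).symm i) := by
          rw [sortedAbs_eq]; simp
        have h2 : |c i| ≤ sortedAbs c 0 := by
          rw [h1]; exact sortedAbs_antitone c (Fin.zero_le _)
        exact abs_eq_zero.1 (le_antisymm (h2.trans_eq hs0) (abs_nonneg _))
      funext j
      have hg : groupNorm grp b (grp j) = 0 := by
        rcases mul_eq_zero.1 (hcz (grp j)) with h' | h'
        · exact absurd h' (hw (grp j)).ne'
        · exact h'
      have hsum : ∑ k ∈ Finset.univ.filter (fun k => grp k = grp j), b k ^ 2 = 0 := by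
        have hnn : (0:ℝ) ≤ ∑ k ∈ Finset.univ.filter (fun k => grp k = grp j), b k ^ 2 :=
          Finset.sum_nonneg fun k _ => sq_nonneg _
        exact (Real.sqrt_eq_zero hnn).1 hg
      have := (Finset.sum_eq_zero_iff_of_nonneg (fun k _ => sq_nonneg (b k))).1 hsum j
        (by simp)
      exact pow_eq_zero_iff (n := 2) (by norm_num) |>.1 this
    · intro h
      subst h
      have hz : (fun i => w i * groupNorm grp (0 : Fin pt → ℝ) i) = fun _ => (0:ℝ) := by
        funext i
        simp [groupNorm]
      rw [hz]
      simp [Jlam, sortedAbs]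
  · -- homogeneity
    intro t b
    have h1 : (fun i => w i * groupNorm grp (t • b) i)
        = fun i => |t| * (w i * groupNorm grp b i) := by
      funext i; rw [gN_smul]; ring
    rw [h1]
    exact Jlam_smul lam hlam_anti hlam_nonneg |t| (abs_nonneg t) _
  · -- triangle inequality
    intro a b
    apply Jlam_add_le' lam hlam_anti hlam_nonneg
    intro i
    rw [abs_of_nonneg (hgNnn _ i), abs_of_nonneg (hgNnn a i), abs_of_nonneg (hgNnn b i)]
    calc w i * groupNorm grp (a + b) i
        ≤ w i * (groupNorm grp a i + groupNorm grp b i) :=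
          mul_le_mul_of_nonneg_left (gN_add_le grp a b i) (hw i).le
      _ = w i * groupNorm grp a i + w i * groupNorm grp b i := by ring
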